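/- If X is countably tight, then C_p(X) is a g-space; that is, every subset A of C_p(X) all of whose infinite subsets have a limit point in C_p(X) has compact closure in C_p(X). -/

import Mathlib

open Set Filter Topology TopologicalSpace

universe u

/-- `C_p(X)`: continuous real-valued functions on `X` with the topology of pointwise
convergence (subspace of `X → ℝ` with the product topology). -/
abbrev Cp (X : Type*) [TopologicalSpace X] : Type _ := {f : X → ℝ // Continuous f}

/-- A space is realcompact if it embeds as a closed subspace of a power of `ℝ`. -/
def Realcompact (X : Type u) [TopologicalSpace X] : Prop :=
  ∃ (I : Type u) (f : X → I → ℝ), IsClosedEmbedding f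

/-- `Y` is countably compact in `X`: every infinite subset of `Y` has a limit
(accumulation) point in `X`. -/
def CountablyCompactIn {X : Type*} [TopologicalSpace X] (Y : Set X) : Prop :=
  ∀ A ⊆ Y, A.Infinite → ∃ x : X, AccPt x (𝓟 A)

/-- A space is countably compact: every countable open cover has a finite subcover. -/
def CountablyCompact (X : Type*) [TopologicalSpace X] : Prop :=
  ∀ U : ℕ → Set X, (∀ n, IsOpen (U n)) → (⋃ n, U n) = univ →
    ∃ t : Finset ℕ, (⋃ n ∈ t, U n) = univ

/-- A space is countably tight if every point in the closure of a set is in the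
closure of a countable subset. -/
def CountablyTight (X : Type*) [TopologicalSpace X] : Prop :=
  ∀ (A : Set X) (x : X), x ∈ closure A → ∃ B ⊆ A, B.Countable ∧ x ∈ closure B

/-- Property wD: for every countably infinite closed discrete subspace `{d n}` there is an
infinite `S ⊆ ℕ` and a discrete family of open sets `U n` (`n ∈ S`) with `d n ∈ U n`. -/
def WD (X : Type*) [TopologicalSpace X] : Prop :=
  ∀ d : ℕ → X, Function.Injective d → IsClosed (Set.range d) →
    DiscreteTopology (Set.range d) →
    ∃ (S : Set ℕ) (U : ℕ → Set X), S.Infinite ∧ (∀ n ∈ S, IsOpen (U n)) ∧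
      (∀ n ∈ S, d n ∈ U n) ∧
      ∀ x : X, ∃ V ∈ 𝓝 x, {n | n ∈ S ∧ (V ∩ U n).Nonempty}.Subsingleton

/-- `N` is a network for `X`. -/
def IsNetwork {X : Type*} [TopologicalSpace X] (N : Set (Set X)) : Prop :=
  ∀ (x : X) (U : Set X), IsOpen U → x ∈ U → ∃ A ∈ N, x ∈ A ∧ A ⊆ U

lemma accPt_inter_infinite {Y : Type*} [TopologicalSpace Y] [T1Space Y] {h : Y} {C : Set Y}
    (hacc : AccPt h (𝓟 C)) {U : Set Y} (hU : U ∈ 𝓝 h) : (U ∩ C).Infinite := by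
  rw [accPt_iff_nhds] at hacc
  intro hfin
  have hFcl : IsClosed ((U ∩ C) \ {h}) := (hfin.diff).isClosed
  have hUc : ((U ∩ C) \ {h})ᶜ ∈ 𝓝 h := hFcl.isOpen_compl.mem_nhds (by simp)
  obtain ⟨y, ⟨hyU', hyC⟩, hyh⟩ := hacc _ (Filter.inter_mem hU hUc)
  exact hyU'.2 ⟨⟨hyU'.1, hyC⟩, hyh⟩

lemma cp_eval_cont {X : Type*} [TopologicalSpace X] (x : X) :
    Continuous (fun u : Cp X => u.1 x) :=
  (continuous_apply x).comp continuous_subtype_val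

lemma exists_gt_mem {Y : Type*} {g : ℕ → Y} {U : Set Y}
    (hinf : (U ∩ Set.range g).Infinite) (n : ℕ) : ∃ k > n, g k ∈ U := by
  by_contra hc
  push_neg at hc
  apply hinf
  have : U ∩ Set.range g ⊆ g '' (Set.Iic n) := by
    rintro y ⟨hyU, k, rfl⟩
    exact ⟨k, by by_contra hk; exact hc k (not_le.mp (by simpa using hk)) hyU, rfl⟩
  exact Set.Finite.subset ((Set.finite_Iic n).image g) this

/-- Main lemma (Asanov–Velichko): if `X` is countably tight and every infinite subset of
`A ⊆ C_p(X)` has an accumulation point in `C_p(X)`, then every pointwise limit of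
elements of `A` is continuous. -/
lemma continuous_of_mem_closure {X : Type*} [TopologicalSpace X] (ht : CountablyTight X)
    (A : Set (Cp X)) (hA : ∀ B ⊆ A, B.Infinite → ∃ f : Cp X, AccPt f (𝓟 B))
    {f : X → ℝ} (hf : f ∈ closure (Subtype.val '' A)) : Continuous f := by
  rw [continuous_iff_continuousAt]
  intro x
  by_contra hc
  rw [ContinuousAt, Filter.tendsto_def] at hc
  push_neg at hc
  obtain ⟨U, hU, hpre⟩ := hc
  obtain ⟨ε, hε, hball⟩ := Metric.mem_nhds_iff.mp hU
  have hpre' : f ⁻¹' Metric.ball (f x) ε ∉ 𝓝 x := fun h =>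
    hpre (Filter.mem_of_superset h (Set.preimage_mono hball))
  set S : Set X := {y | ε ≤ |f y - f x|} with hSdef
  have hScompl : Sᶜ = f ⁻¹' Metric.ball (f x) ε := by
    ext y
    simp [hSdef, Real.dist_eq, not_le]
  have hxS : x ∈ closure S := by
    rw [closure_eq_compl_interior_compl]
    intro hx
    exact hpre' (by rw [← hScompl]; exact mem_interior_iff_mem_nhds.mp hx)
  obtain ⟨B, hBS, hBc, hxB⟩ := ht S x hxS
  have hBne : B.Nonempty := by
    rcases B.eq_empty_or_nonempty with h | h
    · rw [h, closure_empty] at hxB; exact absurd hxB (Set.notMem_empty x)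
    · exact h
  obtain ⟨b, rfl⟩ := hBc.exists_eq_range hBne
  -- construct approximating sequence in A
  have hstep : ∀ k : ℕ, ∃ u : Cp X, u ∈ A ∧ |u.1 x - f x| < ε/4 ∧
      ∀ j < k, |u.1 (b j) - f (b j)| < ε/4 := by
    intro k
    have h1 : {u : X → ℝ | |u x - f x| < ε/4} ∈ 𝓝 f := by
      have := (continuous_apply x).continuousAt (x := f) |>.preimage_mem_nhds
        (Metric.ball_mem_nhds (f x) (show (0:ℝ) < ε/4 by linarith))
      refine Filter.mem_of_superset this ?_
      intro u hu
      simpa [Real.dist_eq] using hu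
    have h2 : ∀ j : ℕ, {u : X → ℝ | |u (b j) - f (b j)| < ε/4} ∈ 𝓝 f := by
      intro j
      have := (continuous_apply (b j)).continuousAt (x := f) |>.preimage_mem_nhds
        (Metric.ball_mem_nhds (f (b j)) (show (0:ℝ) < ε/4 by linarith))
      refine Filter.mem_of_superset this ?_
      intro u hu
      simpa [Real.dist_eq] using hu
    have h3 : (⋂ j ∈ Finset.range k, {u : X → ℝ | |u (b j) - f (b j)| < ε/4}) ∈ 𝓝 f :=
      (Filter.biInter_finset_mem _).mpr fun j _ => h2 j
    have hUk : ({u : X → ℝ | |u x - f x| < ε/4} ∩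
        ⋂ j ∈ Finset.range k, {u : X → ℝ | |u (b j) - f (b j)| < ε/4}) ∈ 𝓝 f :=
      Filter.inter_mem h1 h3
    obtain ⟨u, ⟨hu1, hu2⟩, hu3⟩ := mem_closure_iff_nhds.mp hf _ hUk
    obtain ⟨v, hvA, rfl⟩ := hu3
    exact ⟨v, hvA, hu1, fun j hj => Set.mem_iInter₂.mp hu2 j (Finset.mem_range.mpr hj)⟩
  choose g hgA hgx hgb using hstep
  -- obtain a continuous function close to f on {x} ∪ range b
  have key : ∃ h : Cp X, |h.1 x - f x| ≤ ε/4 ∧ ∀ n, |h.1 (b n) - f (b n)| ≤ ε/4 := by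
    by_cases hfin : (Set.range g).Finite
    · -- pigeonhole: some value of g is attained at arbitrarily large indices
      haveI : Finite (Set.range g) := hfin.to_subtype
      obtain ⟨u, hu⟩ := Finite.exists_infinite_fiber
        (fun n : ℕ => (⟨g n, Set.mem_range_self n⟩ : Set.range g))
      have hK : {n : ℕ | g n = u.1}.Infinite := by
        rw [← Set.infinite_coe_iff]
        refine Set.infinite_coe_iff.mpr ?_
        have : (fun n : ℕ => (⟨g n, Set.mem_range_self n⟩ : Set.range g)) ⁻¹' {u}
            ⊆ {n : ℕ | g n = u.1} := by
          intro n hn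
          simpa using congrArg Subtype.val hn
        exact (Set.infinite_coe_iff.mp hu).mono this
      obtain ⟨k0, hk0⟩ := hK.nonempty
      refine ⟨u.1, ?_, ?_⟩
      · rw [← hk0]; exact le_of_lt (hgx k0)
      · intro n
        obtain ⟨k, hkK, hkn⟩ := hK.exists_gt n
        rw [← hkK]
        exact le_of_lt (hgb k n hkn)
    · obtain ⟨h, hacc⟩ := hA (Set.range g) (Set.range_subset_iff.mpr hgA) hfin
      refine ⟨h, ?_, ?_⟩
      · refine le_of_forall_pos_le_add fun δ hδ => ?_
        have hUnh : {u : Cp X | |u.1 x - h.1 x| < δ} ∈ 𝓝 h := by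
          have := (cp_eval_cont x).continuousAt (x := h) |>.preimage_mem_nhds
            (Metric.ball_mem_nhds (h.1 x) hδ)
          refine Filter.mem_of_superset this ?_
          intro u hu
          simpa [Real.dist_eq] using hu
        obtain ⟨k, _, hkU⟩ := exists_gt_mem (accPt_inter_infinite hacc hUnh) 0
        have := hgx k
        have hk2 : |(g k).1 x - h.1 x| < δ := hkU
        have : |h.1 x - f x| ≤ |h.1 x - (g k).1 x| + |(g k).1 x - f x| := abs_sub_le _ _ _
        have habs : |h.1 x - (g k).1 x| = |(g k).1 x - h.1 x| := abs_sub_comm _ _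
        linarith [hgx k]
      · intro n
        refine le_of_forall_pos_le_add fun δ hδ => ?_
        have hUnh : {u : Cp X | |u.1 (b n) - h.1 (b n)| < δ} ∈ 𝓝 h := by
          have := (cp_eval_cont (b n)).continuousAt (x := h) |>.preimage_mem_nhds
            (Metric.ball_mem_nhds (h.1 (b n)) hδ)
          refine Filter.mem_of_superset this ?_
          intro u hu
          simpa [Real.dist_eq] using hu
        obtain ⟨k, hkn, hkU⟩ := exists_gt_mem (accPt_inter_infinite hacc hUnh) n
        have hk2 : |(g k).1 (b n) - h.1 (b n)| < δ := hkU
        have : |h.1 (b n) - f (b n)| ≤ |h.1 (b n) - (g k).1 (b n)| + |(g k).1 (b n) - f (b n)| :=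
          abs_sub_le _ _ _
        have habs : |h.1 (b n) - (g k).1 (b n)| = |(g k).1 (b n) - h.1 (b n)| := abs_sub_comm _ _
        linarith [hgb k n hkn]
  obtain ⟨h, hhx, hhb⟩ := key
  have hV : (h.1) ⁻¹' (Metric.ball (h.1 x) (ε/4)) ∈ 𝓝 x :=
    h.2.continuousAt.preimage_mem_nhds (Metric.ball_mem_nhds _ (by linarith))
  obtain ⟨y, hyV, hyB⟩ := mem_closure_iff_nhds.mp hxB _ hV
  obtain ⟨n, rfl⟩ := hyB
  have hyS : ε ≤ |f (b n) - f x| := hBS (Set.mem_range_self n)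
  have h1 : |h.1 (b n) - h.1 x| < ε/4 := by simpa [Real.dist_eq] using hyV
  have h2 : |f (b n) - f x| ≤ |f (b n) - h.1 (b n)| + |h.1 (b n) - h.1 x| + |h.1 x - f x| := by
    calc |f (b n) - f x| ≤ |f (b n) - h.1 x| + |h.1 x - f x| := abs_sub_le _ _ _
      _ ≤ (|f (b n) - h.1 (b n)| + |h.1 (b n) - h.1 x|) + |h.1 x - f x| := by
          gcongr; exact abs_sub_le _ _ _
  have h3 : |f (b n) - h.1 (b n)| = |h.1 (b n) - f (b n)| := abs_sub_comm _ _
  linarith [hhb n]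

/-- Pointwise boundedness of a countably-compact-in subset of `C_p(X)`. -/
lemma cp_pointwise_bounded {X : Type*} [TopologicalSpace X]
    (A : Set (Cp X)) (hA : ∀ B ⊆ A, B.Infinite → ∃ f : Cp X, AccPt f (𝓟 B))
    (x : X) : ∃ M : ℝ, ∀ u ∈ A, |u.1 x| ≤ M := by
  by_contra hc
  push_neg at hc
  choose F hFA hFx using fun n : ℕ => hc n
  have hinf : (Set.range F).Infinite := by
    intro hfin
    have hbdd : BddAbove ((fun u : Cp X => |u.1 x|) '' Set.range F) :=
      (hfin.image _).bddAbove
    obtain ⟨M, hM⟩ := hbdd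
    obtain ⟨n, hn⟩ := exists_nat_gt M
    have h1 : |(F n).1 x| ≤ M := hM ⟨F n, Set.mem_range_self n, rfl⟩
    have h2 : M < |(F n).1 x| := lt_trans hn (hFx n)
    linarith
  obtain ⟨h, hacc⟩ := hA (Set.range F) (Set.range_subset_iff.mpr hFA) hinf
  have hUnh : {u : Cp X | |u.1 x - h.1 x| < 1} ∈ 𝓝 h := by
    have := (cp_eval_cont x).continuousAt (x := h) |>.preimage_mem_nhds
      (Metric.ball_mem_nhds (h.1 x) one_pos)
    refine Filter.mem_of_superset this ?_
    intro u hu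
    simpa [Real.dist_eq] using hu
  apply accPt_inter_infinite hacc hUnh
  have hsub : {u : Cp X | |u.1 x - h.1 x| < 1} ∩ Set.range F ⊆
      F '' {n : ℕ | (n : ℝ) < |h.1 x| + 1} := by
    rintro u ⟨hu, n, rfl⟩
    refine ⟨n, ?_, rfl⟩
    have h1 : (n : ℝ) < |(F n).1 x| := hFx n
    have h2 : |(F n).1 x| ≤ |(F n).1 x - h.1 x| + |h.1 x| := by
      simpa using abs_sub_le ((F n).1 x) (h.1 x) 0
    simp only [Set.mem_setOf_eq]
    have := hu
    simp only [Set.mem_setOf_eq] at this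
    linarith
  refine Set.Finite.subset (Set.Finite.image F ?_) hsub
  have : {n : ℕ | (n : ℝ) < |h.1 x| + 1} ⊆ Set.Iio (Nat.ceil (|h.1 x| + 1) + 1) := by
    intro n hn
    simp only [Set.mem_setOf_eq] at hn
    have : (n : ℝ) < (Nat.ceil (|h.1 x| + 1) : ℝ) + 1 :=
      lt_of_lt_of_le hn (by linarith [Nat.le_ceil (|h.1 x| + 1)])
    exact_mod_cast Set.mem_Iio.mpr (by exact_mod_cast this)
  exact (Set.finite_Iio _).subset this

theorem Cp_gspace_of_countablyTight {X : Type*} [TopologicalSpace X]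
    [CompletelyRegularSpace X] [T2Space X] (ht : CountablyTight X) :
    ∀ A : Set (Cp X), (∀ B ⊆ A, B.Infinite → ∃ f : Cp X, AccPt f (𝓟 B)) →
      IsCompact (closure A) := by
  intro A hA
  choose M hM using cp_pointwise_bounded A hA
  set A' : Set (X → ℝ) := Subtype.val '' A with hA'
  have hA'sub : A' ⊆ Set.pi Set.univ fun x => Set.Icc (-(M x)) (M x) := by
    rintro u ⟨v, hv, rfl⟩ x _
    exact abs_le.mp (hM x v hv)
  have hKcl : closure A' ⊆ Set.pi Set.univ fun x => Set.Icc (-(M x)) (M x) :=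
    closure_minimal hA'sub (isClosed_set_pi fun i _ => isClosed_Icc)
  have hKcomp : IsCompact (closure A') :=
    (isCompact_univ_pi fun x => isCompact_Icc).of_isClosed_subset isClosed_closure hKcl
  have hKsub : closure A' ⊆ Set.range (Subtype.val : Cp X → X → ℝ) := fun u hu =>
    ⟨⟨u, continuous_of_mem_closure ht A hA hu⟩, rfl⟩
  rw [IsEmbedding.subtypeVal.isCompact_iff]
  have himg : Subtype.val '' closure A = closure A' := by
    rw [IsEmbedding.subtypeVal.closure_eq_preimage_closure_image A,
      Set.image_preimage_eq_of_subset hKsub]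
  rwa [himg]
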